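/- Let H be a complex Hilbert space and let A and B be bounded linear operators on H. If A is normal (A*A = AA*), then the spectrum of A + B is contained in {z ∈ ℂ : dist(z, σ(A)) ≤ ‖B‖}, where σ(A) is the spectrum of A, dist denotes the distance from a point to a set, and ‖B‖ is the operator norm of B. -/

import Mathlib

open ContinuousLinearMap

/-- If `A` is a normal bounded operator and `B` any bounded operator on a complex Hilbert
space, then `σ(A+B) ⊆ {z : dist(z, σ(A)) ≤ ‖B‖}`. -/
theorem stmt6 {H : Type*} [NormedAddCommGroup H] [InnerProductSpace ℂ H] [CompleteSpace H]
    (A B : H →L[ℂ] H) (hA : adjoint A * A = A * adjoint A) :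
    spectrum ℂ (A + B) ⊆ {z : ℂ | Metric.infDist z (spectrum ℂ A) ≤ ‖B‖} := by
  intro z hz
  simp only [Set.mem_setOf_eq]
  by_contra hlt
  push_neg at hlt
  set d := Metric.infDist z (spectrum ℂ A) with hd
  have hd0 : 0 < d := lt_of_le_of_lt (norm_nonneg B) hlt
  have hzA : z ∉ spectrum ℂ A := by
    intro h
    rw [hd, Metric.infDist_zero_of_mem h] at hd0
    exact lt_irrefl 0 hd0
  have hu : IsUnit ((algebraMap ℂ (H →L[ℂ] H)) z - A) := spectrum.notMem_iff.mp hzA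
  set u := hu.unit with hu'
  have huspec : (↑u : H →L[ℂ] H) = (algebraMap ℂ (H →L[ℂ] H)) z - A := hu.unit_spec
  have hAn : Commute (star A) A := by
    rw [Commute, SemiconjBy, star_eq_adjoint, hA]
  -- u is star-normal
  have hun : Commute (star (↑u : H →L[ℂ] H)) ↑u := by
    rw [huspec, star_sub, ← algebraMap_star_comm]
    exact ((Algebra.commute_algebraMap_left _ _).sub_right
        (Algebra.commute_algebraMap_left _ _)).sub_left
      (((Algebra.commute_algebraMap_left _ _).symm).sub_right hAn)
  have huinv_n : IsStarNormal (↑u⁻¹ : H →L[ℂ] H) := by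
    constructor
    rw [← Units.coe_star_inv]
    have : Commute (↑(star u) : H →L[ℂ] H) ↑u := by rwa [Units.coe_star]
    exact (this.units_inv_left).units_inv_right
  -- spectral radius bound for u⁻¹
  have hbound : ∀ μ ∈ spectrum ℂ (↑u⁻¹ : H →L[ℂ] H), ‖μ‖ ≤ d⁻¹ := by
    intro μ hμ
    have hμ0 : μ ≠ 0 := by
      intro h
      rw [h] at hμ
      exact spectrum.zero_notMem ℂ (u⁻¹).isUnit hμ
    have hμinv : ((μ⁻¹ : ℂ)) ∈ spectrum ℂ (↑u : H →L[ℂ] H) := by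
      have := (spectrum.inv_mem_iff (r := (Units.mk0 μ hμ0)⁻¹) (a := u)).mpr
      simpa using this (by simpa using hμ)
    rw [huspec, ← spectrum.singleton_sub_eq] at hμinv
    obtain ⟨x, hx, y, hy, hxy⟩ := hμinv
    rw [Set.mem_singleton_iff] at hx
    rw [hx] at hxy
    have hdist : d ≤ ‖μ⁻¹‖ := by
      rw [← hxy]
      calc d ≤ dist z y := Metric.infDist_le_dist_of_mem hy
        _ = ‖z - y‖ := by rw [dist_eq_norm]
    rw [norm_inv] at hdist
    rw [← inv_inv ‖μ‖]
    exact inv_anti₀ hd0 hdist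
  have hnorm_inv : ‖(↑u⁻¹ : H →L[ℂ] H)‖ ≤ d⁻¹ := by
    have h1 : spectralRadius ℂ (↑u⁻¹ : H →L[ℂ] H) = ‖(↑u⁻¹ : H →L[ℂ] H)‖₊ :=
      IsStarNormal.spectralRadius_eq_nnnorm _
    have h2 : spectralRadius ℂ (↑u⁻¹ : H →L[ℂ] H) ≤ ENNReal.ofReal d⁻¹ := by
      rw [spectralRadius]
      refine iSup₂_le fun μ hμ => ?_
      rw [← enorm_eq_nnnorm, ← ofReal_norm]
      exact ENNReal.ofReal_le_ofReal (hbound μ hμ)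
    rw [h1] at h2
    have := ENNReal.toReal_mono (by simp) h2
    simpa [ENNReal.toReal_ofReal (le_of_lt (inv_pos.mpr hd0))] using this
  -- now show A + B - z is a unit
  have hsmall : ‖(↑u⁻¹ : H →L[ℂ] H) * B‖ < 1 := by
    calc ‖(↑u⁻¹ : H →L[ℂ] H) * B‖ ≤ ‖(↑u⁻¹ : H →L[ℂ] H)‖ * ‖B‖ := norm_mul_le _ _
      _ ≤ d⁻¹ * ‖B‖ := by
          exact mul_le_mul_of_nonneg_right hnorm_inv (norm_nonneg B)
      _ < d⁻¹ * d := by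
          exact mul_lt_mul_of_pos_left hlt (inv_pos.mpr hd0)
      _ = 1 := inv_mul_cancel₀ (ne_of_gt hd0)
  have hone : IsUnit (1 - (↑u⁻¹ : H →L[ℂ] H) * B) := (Units.oneSub _ hsmall).isUnit
  have hfinal : IsUnit ((algebraMap ℂ (H →L[ℂ] H)) z - (A + B)) := by
    have : (algebraMap ℂ (H →L[ℂ] H)) z - (A + B)
        = ↑u * (1 - (↑u⁻¹ : H →L[ℂ] H) * B) := by
      rw [mul_sub, mul_one, ← mul_assoc, Units.mul_inv, one_mul, huspec, sub_sub]
    rw [this]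
    exact hu.unit.isUnit.mul hone
  exact (spectrum.notMem_iff.mpr hfinal) hz
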